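/- arXiv:0809.4931 — 6 statements merged into one kernel-verified Lean document; each statement's English description precedes it below -/
import Mathlib

section
/- Let g ≥ 0 be an integer, let X ∈ ℂ[s] be a polynomial of degree 2g+2 which is not the square of a polynomial and with X(0) ≠ 0, let t ∈ ℂ be nonzero, and fix ξ, η ∈ ℂ with ξ² = X(0) and η² = X(t). Then there exists a unique triple of polynomials (A, B, C) in ℂ[s] with deg A ≤ g+1, deg B ≤ g, deg C ≤ g, such that A(0) = ξ, A = η + C·(s − t), and X − A² = B·s^{g+1}·(s − t). -/
open Polynomial

/-- Existence of a square root of `XX` modulo `X^(n+1)`. -/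
lemma sqrt_mod_pow (XX : ℂ[X]) (ξ : ℂ) (hξ0 : ξ ≠ 0) (hξ : ξ ^ 2 = XX.eval 0) :
    ∀ n : ℕ, ∃ P : ℂ[X], P.natDegree ≤ n ∧ P.eval 0 = ξ ∧ X ^ (n + 1) ∣ XX - P ^ 2 := by
  intro n
  induction n with
  | zero =>
    refine ⟨C ξ, by simp, by simp, ?_⟩
    rw [pow_one, X_dvd_iff, coeff_zero_eq_eval_zero]
    simp [← hξ]
  | succ n ih =>
    obtain ⟨P, hd, h0, ⟨Q, hQ⟩⟩ := ih
    set c : ℂ := Q.eval 0 / (2 * ξ) with hc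
    refine ⟨P + C c * X ^ (n + 1), ?_, ?_, ?_⟩
    · refine (natDegree_add_le _ _).trans (max_le (hd.trans (Nat.le_succ n)) ?_)
      exact (natDegree_C_mul_le _ _).trans (by simp)
    · simp [h0]
    · set R : ℂ[X] := Q - 2 * C c * P - (C c) ^ 2 * X ^ (n + 1) with hR
      have key : XX - (P + C c * X ^ (n + 1)) ^ 2 = X ^ (n + 1) * R := by
        rw [hR]; ring_nf; linear_combination hQ
      have hXR : X ∣ R := by
        rw [X_dvd_iff, coeff_zero_eq_eval_zero, hR]
        simp only [eval_sub, eval_mul, eval_pow, eval_ofNat, eval_C, eval_X, h0]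
        rw [hc]
        field_simp
        ring
      obtain ⟨S, hS⟩ := hXR
      exact ⟨S, by rw [key, hS, pow_succ]; ring⟩

/-- **Basic Algebraic Lemma.** For a polynomial `XX` of degree `2g+2` which is not a
square, with `XX(0) ≠ 0`, a nonzero `t`, and square roots `ξ` of `XX(0)` and `η` of
`XX(t)`, there is a unique triple `(A, B, C)` of polynomials with `deg A ≤ g+1`,
`deg B ≤ g`, `deg C ≤ g` such that `A(0) = ξ`, `A = η + C·(s−t)` and
`XX − A² = B·s^{g+1}·(s−t)`. -/
theorem stmt_0 (g : ℕ) (XX : ℂ[X]) (hdeg : XX.natDegree = 2 * g + 2)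
    (hsq : ¬ ∃ P : ℂ[X], XX = P ^ 2)
    (hX0 : XX.eval 0 ≠ 0) (t : ℂ) (ht : t ≠ 0)
    (ξ η : ℂ) (hξ : ξ ^ 2 = XX.eval 0) (hη : η ^ 2 = XX.eval t) :
    ∃! ABC : ℂ[X] × ℂ[X] × ℂ[X],
      ABC.1.natDegree ≤ g + 1 ∧ ABC.2.1.natDegree ≤ g ∧ ABC.2.2.natDegree ≤ g ∧
      ABC.1.eval 0 = ξ ∧
      ABC.1 = C η + ABC.2.2 * (X - C t) ∧
      XX - ABC.1 ^ 2 = ABC.2.1 * X ^ (g + 1) * (X - C t) := by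
  have hξ0 : ξ ≠ 0 := fun h => hX0 (by rw [← hξ, h]; ring)
  -- coprimality of X^(g+1) and X - C t
  have hcop : IsCoprime ((X : ℂ[X]) ^ (g + 1)) (X - C t) := by
    refine IsCoprime.pow_left ⟨C t⁻¹, -C t⁻¹, ?_⟩
    have h1 : (C t⁻¹ : ℂ[X]) * X + -C t⁻¹ * (X - C t) = C t⁻¹ * C t := by ring
    rw [h1, ← C_mul, inv_mul_cancel₀ ht, C_1]
  have hMdeg : ((X : ℂ[X]) ^ (g + 1) * (X - C t)).natDegree = g + 2 := by
    rw [natDegree_mul (pow_ne_zero _ X_ne_zero) (X_sub_C_ne_zero t), natDegree_pow,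
      natDegree_X_sub_C, natDegree_X]
    ring
  have hMne : ((X : ℂ[X]) ^ (g + 1) * (X - C t)) ≠ 0 :=
    fun h => by simp [h] at hMdeg
  -- existence
  obtain ⟨P, hPd, hP0, hPdvd⟩ := sqrt_mod_pow XX ξ hξ0 hξ g
  set c : ℂ := (η - P.eval t) / t ^ (g + 1) with hcdef
  set A : ℂ[X] := P + C c * X ^ (g + 1) with hA
  have hAd : A.natDegree ≤ g + 1 := by
    refine (natDegree_add_le _ _).trans (max_le (hPd.trans (Nat.le_succ g)) ?_)
    exact (natDegree_C_mul_le _ _).trans (by simp)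
  have hA0 : A.eval 0 = ξ := by simp [hA, hP0]
  have hAt : A.eval t = η := by
    simp only [hA, eval_add, eval_mul, eval_C, eval_pow, eval_X, hcdef]
    field_simp
    ring
  have hAdvd1 : (X : ℂ[X]) ^ (g + 1) ∣ XX - A ^ 2 := by
    have : XX - A ^ 2 = (XX - P ^ 2) - X ^ (g + 1) * (2 * C c * P + C c ^ 2 * X ^ (g + 1)) := by
      rw [hA]; ring
    rw [this]
    exact dvd_sub hPdvd ⟨_, rfl⟩
  have hAdvd2 : (X - C t) ∣ XX - A ^ 2 := by
    rw [dvd_iff_isRoot]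
    simp [IsRoot, hAt, ← hη]
  have hAdvd : (X : ℂ[X]) ^ (g + 1) * (X - C t) ∣ XX - A ^ 2 := hcop.mul_dvd hAdvd1 hAdvd2
  obtain ⟨B, hB⟩ := hAdvd
  have hCd : (X - C t) ∣ A - C η := by
    rw [dvd_iff_isRoot]; simp [IsRoot, hAt]
  obtain ⟨Cp, hCp⟩ := hCd
  have hA2le : (XX - A ^ 2).natDegree ≤ 2 * g + 2 := by
    have h2 : (A ^ 2).natDegree = 2 * A.natDegree := natDegree_pow A 2
    exact (natDegree_sub_le _ _).trans (max_le hdeg.le (by omega))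
  have hBd : B.natDegree ≤ g := by
    by_cases hB0 : B = 0
    · simp [hB0]
    have hne : XX - A ^ 2 ≠ 0 := by
      rw [hB]; exact mul_ne_zero hMne hB0
    have := natDegree_mul hMne hB0
    rw [← hB] at this
    omega
  have hCpd : Cp.natDegree ≤ g := by
    by_cases hC0 : Cp = 0
    · simp [hC0]
    have h1 : (A - C η).natDegree ≤ g + 1 :=
      (natDegree_sub_le _ _).trans (max_le hAd (by simp))
    rw [hCp, natDegree_mul (X_sub_C_ne_zero t) hC0, natDegree_X_sub_C] at h1
    omega
  refine ⟨⟨A, B, Cp⟩, ⟨hAd, hBd, hCpd, hA0, ?_, ?_⟩, ?_⟩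
  · dsimp only; linear_combination hCp
  · dsimp only; rw [hB]; ring
  -- uniqueness
  rintro ⟨A', B', C'⟩ ⟨hA'd, hB'd, hC'd, hA'0, hA'eq, hXXeq⟩
  dsimp only at hA'd hB'd hC'd hA'0 hA'eq hXXeq
  have hA't : A'.eval t = η := by
    rw [hA'eq]; simp
  have hAA : A' = A := by
    have d1 : (X : ℂ[X]) ^ (g + 1) ∣ (A' - A) * (A' + A) := by
      have h2 : (X : ℂ[X]) ^ (g + 1) ∣ XX - A' ^ 2 := ⟨B' * (X - C t), by rw [hXXeq]; ring⟩
      have : (A' - A) * (A' + A) = (XX - A ^ 2) - (XX - A' ^ 2) := by ring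
      rw [this]
      exact dvd_sub hAdvd1 h2
    have hnd : ¬ (X : ℂ[X]) ∣ (A' + A) := by
      rw [X_dvd_iff, coeff_zero_eq_eval_zero]
      simp only [eval_add, hA'0, hA0]
      intro h
      exact hξ0 (by linear_combination h / 2)
    have d2 : (X : ℂ[X]) ^ (g + 1) ∣ A' - A :=
      prime_X.pow_dvd_of_dvd_mul_right _ hnd d1
    have d3 : (X - C t) ∣ A' - A := by
      rw [dvd_iff_isRoot]; simp [IsRoot, hAt, hA't]
    have d4 : (X : ℂ[X]) ^ (g + 1) * (X - C t) ∣ A' - A := hcop.mul_dvd d2 d3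
    by_contra hne
    have hne' : A' - A ≠ 0 := sub_ne_zero.mpr hne
    have := natDegree_le_of_dvd d4 hne'
    rw [hMdeg] at this
    have := (natDegree_sub_le A' A).trans (max_le hA'd hAd)
    omega
  have hCC : C' = Cp := by
    have : C' * (X - C t) = Cp * (X - C t) := by
      have e1 : C' * (X - C t) = A' - C η := by rw [hA'eq]; ring
      have e2 : Cp * (X - C t) = A - C η := by rw [hCp]; ring
      rw [e1, e2, hAA]
    exact mul_right_cancel₀ (X_sub_C_ne_zero t) this
  have hBB : B' = B := by
    have : B' * (X ^ (g + 1) * (X - C t)) = B * (X ^ (g + 1) * (X - C t)) := by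
      have e1 : B' * (X ^ (g + 1) * (X - C t)) = XX - A' ^ 2 := by rw [hXXeq]; ring
      rw [e1, hAA, hB]; ring
    exact mul_right_cancel₀ hMne this
  simp only [Prod.mk.injEq]; exact ⟨hAA, hBB, hCC⟩
end

section
/- Let X = p₀ + p₁s + p₂s² + p₃s³ + p₄s⁴ ∈ ℂ[s] with p₀ ≠ 0, and let q₁, q₂, q₃, q₄ be the first coefficients of the unique formal power series 1 + q₁s + q₂s² + ⋯ ∈ ℂ[[s]] whose square is X/p₀. Let λ ∈ ℂ with p₀λ² ≠ p₄ and with v := (q₂ − λ)/2 ≠ 0, and suppose t, t′ ∈ ℂ are nonzero and satisfy (p₄ − p₀λ²)s² + (p₃ − p₁λ)s + 2p₀(q₂ − λ) = (p₄ − p₀λ²)(s − t)(s − t′) as polynomials in s. Set u = −1/t − q₁ and u′ = −1/t′ − q₁. Then u + u′ = −q₁ + q₃/(2v) and v + u·u′ = q₂ + q₄/(2v). -/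
open Polynomial

/-- First set of recurrence relations for the normal form of the genus-one Halphen
continued fraction: with `u = −1/t − q₁`, `u′ = −1/t′ − q₁`, `v = (q₂ − λ)/2 ≠ 0`,
one has `u + u′ = −q₁ + q₃/(2v)` and `v + u·u′ = q₂ + q₄/(2v)`. -/
theorem stmt_7 (p₀ p₁ p₂ p₃ p₄ : ℂ) (hp₀ : p₀ ≠ 0)
    (XX : ℂ[X]) (hXX : XX = C p₀ + C p₁ * X + C p₂ * X ^ 2 + C p₃ * X ^ 3 + C p₄ * X ^ 4)
    (τ : PowerSeries ℂ) (hτ0 : PowerSeries.constantCoeff τ = 1)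
    (hτ : PowerSeries.C p₀ * τ ^ 2 = (XX : PowerSeries ℂ))
    (q₁ q₂ q₃ q₄ : ℂ) (hq₁ : q₁ = PowerSeries.coeff 1 τ)
    (hq₂ : q₂ = PowerSeries.coeff 2 τ) (hq₃ : q₃ = PowerSeries.coeff 3 τ)
    (hq₄ : q₄ = PowerSeries.coeff 4 τ)
    (lam : ℂ) (hlam : p₀ * lam ^ 2 ≠ p₄)
    (v : ℂ) (hv : v = (q₂ - lam) / 2) (hvne : v ≠ 0)
    (t t' : ℂ) (ht : t ≠ 0) (ht' : t' ≠ 0)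
    (hfac : C (p₄ - p₀ * lam ^ 2) * X ^ 2 + C (p₃ - p₁ * lam) * X + C (2 * p₀ * (q₂ - lam))
      = C (p₄ - p₀ * lam ^ 2) * (X - C t) * (X - C t'))
    (u u' : ℂ) (hu : u = -1 / t - q₁) (hu' : u' = -1 / t' - q₁) :
    u + u' = -q₁ + q₃ / (2 * v) ∧
    v + u * u' = q₂ + q₄ / (2 * v) := by
  have hql : q₂ - lam ≠ 0 := by
    intro h; apply hvne; rw [hv, h, zero_div]
  have h1 := congrArg (PowerSeries.coeff 1) hτ
  have h3 := congrArg (PowerSeries.coeff 3) hτ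
  have h4 := congrArg (PowerSeries.coeff 4) hτ
  simp only [hXX, sq, PowerSeries.coeff_mul, Finset.Nat.sum_antidiagonal_eq_sum_range_succ_mk,
    Finset.sum_range_succ, hτ0, Polynomial.coeff_coe, PowerSeries.coeff_X,
    PowerSeries.coeff_X_pow] at h1 h3 h4
  simp [hτ0, ← hq₁, ← hq₂, ← hq₃, ← hq₄, PowerSeries.coeff_X, PowerSeries.coeff_X_pow,
    Polynomial.coeff_coe, hXX, coeff_add, coeff_C_mul, coeff_X_pow, Polynomial.coeff_X,
    coeff_C] at h1 h3 h4
  have f0 := congrArg (fun P : ℂ[X] => P.coeff 0) hfac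
  have f1 := congrArg (fun P : ℂ[X] => P.coeff 1) hfac
  simp only [mul_sub, sub_mul, coeff_sub, coeff_add, coeff_C_mul, coeff_X_pow, coeff_X,
    coeff_C, mul_assoc] at f0 f1
  norm_num at f0 f1
  have hsum : 1 / t + 1 / t' = (p₁ * lam - p₃) / (2 * p₀ * (q₂ - lam)) := by
    field_simp
    linear_combination (t + t') * f0 + (t * t') * f1
  have hprod : (1 / t) * (1 / t') = (p₄ - p₀ * lam ^ 2) / (2 * p₀ * (q₂ - lam)) := by
    field_simp
    linear_combination f0
  have hsum2 : 1 / t + 1 / t' = -q₁ - q₃ / (q₂ - lam) := by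
    rw [hsum]; field_simp
    linear_combination h3 - lam * h1
  have hprod2 : (1 / t) * (1 / t')
      = q₄ / (q₂ - lam) + q₁ * q₃ / (q₂ - lam) + (q₂ + lam) / 2 := by
    rw [hprod]; field_simp
    linear_combination (-1) * h4
  subst hu hu' hv
  constructor
  · have h : -1 / t - q₁ + (-1 / t' - q₁) = -(1 / t + 1 / t') - 2 * q₁ := by ring
    rw [h, hsum2]
    field_simp
    ring
  · have h : (q₂ - lam) / 2 + (-1 / t - q₁) * (-1 / t' - q₁)
        = (q₂ - lam) / 2 + (1 / t) * (1 / t') + q₁ * (1 / t + 1 / t') + q₁ ^ 2 := by ring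
    rw [h, hsum2, hprod2]
    field_simp
    ring
end

section
/- Let X = p₀ + p₁s + p₂s² + p₃s³ + p₄s⁴ ∈ ℂ[s] with p₀ ≠ 0, fix ξ with ξ² = p₀, and let q₁, q₂, q₃, q₄ be the first coefficients of the unique formal power series 1 + q₁s + q₂s² + ⋯ ∈ ℂ[[s]] whose square is X/p₀. Let t ∈ ℂ be nonzero and η ∈ ℂ with η² = X(t), and set λ = (η/ξ − (1 + q₁t))/t², λ′ = (−η/ξ − (1 + q₁t))/t², u = −1/t − q₁, v = (q₂ − λ′)/2 and v″ = (q₂ − λ)/2. Then v + v″ = q₂ + q₁u + u² and 2v·v″ = −q₄ + q₃u. -/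
open Polynomial

private lemma stmt8_aux (q₁ q₂ q₃ q₄ t r : ℂ) (ht : t ≠ 0)
    (hr : r ^ 2 = 1 + 2*q₁*t + (2*q₂+q₁^2)*t^2 + (2*q₃+2*q₁*q₂)*t^3 + (2*q₄+2*q₁*q₃+q₂^2)*t^4) :
    2 * ((q₂ - (-r - (1 + q₁ * t)) / t ^ 2) / 2 * ((q₂ - (r - (1 + q₁ * t)) / t ^ 2) / 2)) =
      -q₄ + q₃ * (-1 / t - q₁) := by
  field_simp
  linear_combination (-1) * hr

private lemma stmt8_aux2 (q₁ q₂ t r : ℂ) (ht : t ≠ 0) :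
    (q₂ - (-r - (1 + q₁ * t)) / t ^ 2) / 2 + (q₂ - (r - (1 + q₁ * t)) / t ^ 2) / 2 =
      q₂ + q₁ * (-1 / t - q₁) + (-1 / t - q₁) ^ 2 := by
  field_simp
  ring

/-- Second set of recurrence relations for the normal form of the genus-one Halphen
continued fraction: with `λ = (η/ξ − (1 + q₁t))/t²`, `λ′ = (−η/ξ − (1 + q₁t))/t²`,
`u = −1/t − q₁`, `v = (q₂ − λ′)/2`, `v″ = (q₂ − λ)/2`, one has
`v + v″ = q₂ + q₁u + u²` and `2v·v″ = −q₄ + q₃u`. -/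
theorem stmt_8 (p₀ p₁ p₂ p₃ p₄ : ℂ) (hp₀ : p₀ ≠ 0)
    (XX : ℂ[X]) (hXX : XX = C p₀ + C p₁ * X + C p₂ * X ^ 2 + C p₃ * X ^ 3 + C p₄ * X ^ 4)
    (ξ : ℂ) (hξ : ξ ^ 2 = p₀)
    (τ : PowerSeries ℂ) (hτ0 : PowerSeries.constantCoeff τ = 1)
    (hτ : PowerSeries.C p₀ * τ ^ 2 = (XX : PowerSeries ℂ))
    (q₁ q₂ q₃ q₄ : ℂ) (hq₁ : q₁ = PowerSeries.coeff 1 τ)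
    (hq₂ : q₂ = PowerSeries.coeff 2 τ) (hq₃ : q₃ = PowerSeries.coeff 3 τ)
    (hq₄ : q₄ = PowerSeries.coeff 4 τ)
    (t : ℂ) (ht : t ≠ 0) (η : ℂ) (hη : η ^ 2 = XX.eval t)
    (lam lam' : ℂ)
    (hlam : lam = (η / ξ - (1 + q₁ * t)) / t ^ 2)
    (hlam' : lam' = (-η / ξ - (1 + q₁ * t)) / t ^ 2)
    (u v v'' : ℂ) (hu : u = -1 / t - q₁)
    (hv : v = (q₂ - lam') / 2) (hv'' : v'' = (q₂ - lam) / 2) :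
    v + v'' = q₂ + q₁ * u + u ^ 2 ∧
    2 * (v * v'') = -q₄ + q₃ * u := by
  have hξ0 : ξ ≠ 0 := by
    intro h; apply hp₀; rw [← hξ, h]; ring
  have h0 : PowerSeries.coeff 0 τ = 1 := by
    simpa using hτ0
  have key : ∀ n, p₀ * (PowerSeries.coeff n (τ * τ)) = XX.coeff n := by
    intro n
    have := congrArg (PowerSeries.coeff n) hτ
    simpa [pow_two, Polynomial.coeff_coe] using this
  have hc1 : p₁ = p₀ * (2 * q₁) := by
    have := key 1
    simp [PowerSeries.coeff_mul, Finset.Nat.sum_antidiagonal_eq_sum_range_succ_mk,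
      Finset.sum_range_succ, h0, hXX, coeff_add, coeff_C_mul, coeff_X_pow, coeff_X, coeff_C] at this
    rw [← this, hq₁]; ring
  have hc2 : p₂ = p₀ * (2 * q₂ + q₁ ^ 2) := by
    have := key 2
    simp [PowerSeries.coeff_mul, Finset.Nat.sum_antidiagonal_eq_sum_range_succ_mk,
      Finset.sum_range_succ, h0, hXX, coeff_add, coeff_C_mul, coeff_X_pow, coeff_X, coeff_C] at this
    rw [← this, hq₁, hq₂]; ring
  have hc3 : p₃ = p₀ * (2 * q₃ + 2 * q₁ * q₂) := by
    have := key 3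
    simp [PowerSeries.coeff_mul, Finset.Nat.sum_antidiagonal_eq_sum_range_succ_mk,
      Finset.sum_range_succ, h0, hXX, coeff_add, coeff_C_mul, coeff_X_pow, coeff_X, coeff_C] at this
    rw [← this, hq₁, hq₂, hq₃]; ring
  have hc4 : p₄ = p₀ * (2 * q₄ + 2 * q₁ * q₃ + q₂ ^ 2) := by
    have := key 4
    simp [PowerSeries.coeff_mul, Finset.Nat.sum_antidiagonal_eq_sum_range_succ_mk,
      Finset.sum_range_succ, h0, hXX, coeff_add, coeff_C_mul, coeff_X_pow, coeff_X, coeff_C] at this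
    rw [← this, hq₁, hq₂, hq₃, hq₄]; ring
  have hE : η ^ 2 = p₀ + p₁ * t + p₂ * t ^ 2 + p₃ * t ^ 3 + p₄ * t ^ 4 := by
    rw [hη, hXX]
    simp only [eval_add, eval_mul, eval_pow, eval_C, eval_X]
  have hr : (η / ξ) ^ 2 = 1 + 2*q₁*t + (2*q₂+q₁^2)*t^2 + (2*q₃+2*q₁*q₂)*t^3
      + (2*q₄+2*q₁*q₃+q₂^2)*t^4 := by
    have h' : η ^ 2 = ξ ^ 2 * (1 + 2*q₁*t + (2*q₂+q₁^2)*t^2 + (2*q₃+2*q₁*q₂)*t^3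
        + (2*q₄+2*q₁*q₃+q₂^2)*t^4) := by
      linear_combination hE + t*hc1 + t^2*hc2 + t^3*hc3 + t^4*hc4
        - (1 + 2*q₁*t + (2*q₂+q₁^2)*t^2 + (2*q₃+2*q₁*q₂)*t^3 + (2*q₄+2*q₁*q₃+q₂^2)*t^4) * hξ
    rw [div_pow, h']
    exact mul_div_cancel_left₀ _ (pow_ne_zero 2 hξ0)
  subst hv hv'' hlam hlam' hu
  refine ⟨by rw [neg_div]; exact stmt8_aux2 q₁ q₂ t (η/ξ) ht, ?_⟩
  have hgoal := stmt8_aux q₁ q₂ q₃ q₄ t (η/ξ) ht hr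
  calc 2 * ((q₂ - (-η / ξ - (1 + q₁ * t)) / t ^ 2) / 2 *
        ((q₂ - (η / ξ - (1 + q₁ * t)) / t ^ 2) / 2))
      = 2 * ((q₂ - (-(η/ξ) - (1 + q₁ * t)) / t ^ 2) / 2 *
        ((q₂ - ((η/ξ) - (1 + q₁ * t)) / t ^ 2) / 2)) := by rw [neg_div]
    _ = -q₄ + q₃ * (-1 / t - q₁) := hgoal
end

section
/- Let X ∈ ℂ[s] be of degree 6 with X(0) = p₀ ≠ 0, fix ξ with ξ² = p₀, and let q₁, …, q₆ be the first coefficients of the unique formal power series 1 + q₁s + q₂s² + ⋯ ∈ ℂ[[s]] whose square is X/p₀. Let t ∈ ℂ be nonzero, η ∈ ℂ with η² = X(t), write w = 1 + q₁t + q₂t², and set λ = (η/ξ − w)/t³, λ′ = (−η/ξ − w)/t³, u = w/t² = (1 + q₁t + q₂t²)/t², v = (q₃ − λ′)/2, v′ = (q₃ − λ)/2. Then v + v′ = u/t + q₃ and 4v·v′ = −2q₆ − 2q₁q₅ − 2q₄u − 2q₅/t. -/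
open Polynomial

/-- Recurrence relations for the normal form of the genus-two Halphen continued
fraction: with `w = 1 + q₁t + q₂t²`, `λ = (η/ξ − w)/t³`, `λ′ = (−η/ξ − w)/t³`,
`u = w/t²`, `v = (q₃ − λ′)/2`, `v′ = (q₃ − λ)/2`, one has `v + v′ = u/t + q₃` and
`4vv′ = −2q₆ − 2q₁q₅ − 2q₄u − 2q₅/t`. -/
theorem stmt_13 (XX : ℂ[X]) (hdeg : XX.natDegree = 6)
    (p₀ : ℂ) (hp₀ : XX.eval 0 = p₀) (hp₀ne : p₀ ≠ 0)
    (ξ : ℂ) (hξ : ξ ^ 2 = p₀)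
    (τ : PowerSeries ℂ) (hτ0 : PowerSeries.constantCoeff τ = 1)
    (hτ : PowerSeries.C p₀ * τ ^ 2 = (XX : PowerSeries ℂ))
    (q₁ q₂ q₃ q₄ q₅ q₆ : ℂ) (hq₁ : q₁ = PowerSeries.coeff 1 τ)
    (hq₂ : q₂ = PowerSeries.coeff 2 τ) (hq₃ : q₃ = PowerSeries.coeff 3 τ)
    (hq₄ : q₄ = PowerSeries.coeff 4 τ) (hq₅ : q₅ = PowerSeries.coeff 5 τ)
    (hq₆ : q₆ = PowerSeries.coeff 6 τ)
    (t : ℂ) (ht : t ≠ 0) (η : ℂ) (hη : η ^ 2 = XX.eval t)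
    (w : ℂ) (hw : w = 1 + q₁ * t + q₂ * t ^ 2)
    (lam lam' : ℂ)
    (hlam : lam = (η / ξ - w) / t ^ 3)
    (hlam' : lam' = (-η / ξ - w) / t ^ 3)
    (u v v' : ℂ) (hu : u = w / t ^ 2)
    (hv : v = (q₃ - lam') / 2) (hv' : v' = (q₃ - lam) / 2) :
    v + v' = u / t + q₃ ∧
    4 * (v * v') = -2 * q₆ - 2 * q₁ * q₅ - 2 * q₄ * u - 2 * q₅ / t := by

  have hξne : ξ ≠ 0 := by
    intro h
    exact hp₀ne (by rw [← hξ, h]; ring)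
  have hcoeff : ∀ n : ℕ, XX.coeff n =
      p₀ * ∑ i ∈ Finset.range (n + 1),
        PowerSeries.coeff i τ * PowerSeries.coeff (n - i) τ := by
    intro n
    have h := congrArg (PowerSeries.coeff n) hτ
    rw [Polynomial.coeff_coe] at h
    rw [← h, PowerSeries.coeff_C_mul, sq, PowerSeries.coeff_mul,
      Finset.Nat.sum_antidiagonal_eq_sum_range_succ_mk]
  have ha0 : PowerSeries.coeff 0 τ = 1 := by
    rw [PowerSeries.coeff_zero_eq_constantCoeff, hτ0]
  have heval : XX.eval t = ∑ n ∈ Finset.range 7, XX.coeff n * t ^ n := by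
    conv_lhs => rw [Polynomial.eval_eq_sum_range]
    rw [hdeg]
  have hkey : η ^ 2 = p₀ *
      (1 + 2 * q₁ * t + (2 * q₂ + q₁ ^ 2) * t ^ 2
        + (2 * q₃ + 2 * q₁ * q₂) * t ^ 3
        + (2 * q₄ + 2 * q₁ * q₃ + q₂ ^ 2) * t ^ 4
        + (2 * q₅ + 2 * q₁ * q₄ + 2 * q₂ * q₃) * t ^ 5
        + (2 * q₆ + 2 * q₁ * q₅ + 2 * q₂ * q₄ + q₃ ^ 2) * t ^ 6) := by
    rw [hη, heval]
    simp only [Finset.sum_range_succ, Finset.sum_range_zero, hcoeff, ha0]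
    rw [hq₁, hq₂, hq₃, hq₄, hq₅, hq₆]
    norm_num
    ring
  have hr2 : (η / ξ) ^ 2 =
      1 + 2 * q₁ * t + (2 * q₂ + q₁ ^ 2) * t ^ 2
        + (2 * q₃ + 2 * q₁ * q₂) * t ^ 3
        + (2 * q₄ + 2 * q₁ * q₃ + q₂ ^ 2) * t ^ 4
        + (2 * q₅ + 2 * q₁ * q₄ + 2 * q₂ * q₃) * t ^ 5
        + (2 * q₆ + 2 * q₁ * q₅ + 2 * q₂ * q₄ + q₃ ^ 2) * t ^ 6 := by
    rw [div_pow, hkey, hξ]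
    field_simp
  constructor
  · rw [hv, hv', hlam, hlam', hu, hw]
    field_simp
    ring
  · have h4 : 4 * (v * v') =
        q₃ ^ 2 + 2 * q₃ * w / t ^ 3 + (w ^ 2 - (η / ξ) ^ 2) / t ^ 6 := by
      rw [hv, hv', hlam, hlam']
      field_simp [ht, hξne]
      ring
    rw [h4, hr2, hu, hw]
    field_simp
    ring
end

section
/- Under the hypotheses of the hyperelliptic Halphen continued-fraction package (see context), for every 0 ≤ k ≤ m the identity G_k − H_k·F = (−1)^{k+1}·Q₀·Q₁·⋯·Q_k holds in ℂ[[s]]. -/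
open Polynomial

private lemma pcoe_sub (a b : ℂ[X]) :
    ((a - b : ℂ[X]) : PowerSeries ℂ) = (a : PowerSeries ℂ) - (b : PowerSeries ℂ) := by
  have := map_sub (Polynomial.coeToPowerSeries.ringHom (R := ℂ)) a b
  simpa using this

/-- For the hyperelliptic Halphen continued-fraction package, for every `0 ≤ k ≤ m`
the identity `G_k − H_k·F = (−1)^{k+1}·Q₀·Q₁⋯Q_k` holds in `ℂ[[s]]`. -/
theorem stmt_18 (g : ℕ) (hg : 1 ≤ g)
    (XX : ℂ[X]) (hdeg : XX.natDegree = 2 * g + 2)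
    (p₀ : ℂ) (hp₀ : XX.coeff 0 = p₀) (hp₀ne : p₀ ≠ 0)
    (ξ : ℂ) (hξ : ξ ^ 2 = p₀)
    (σ : PowerSeries ℂ) (hσ0 : PowerSeries.constantCoeff σ = ξ)
    (hσ : σ ^ 2 = (XX : PowerSeries ℂ))
    (m : ℕ)
    (t : ℕ → ℂ) (ht : ∀ i ≤ m, t i ≠ 0)
    (A B : ℕ → ℂ[X])
    (hAdeg : ∀ i ≤ m, (A i).natDegree ≤ g + 1)
    (hA0 : ∀ i ≤ m, (A i).eval 0 = ξ)
    (hXAB : ∀ i ≤ m, XX - (A i) ^ 2 = B i * X ^ (g + 1) * (X - C (t i)))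
    (hdvd : ∀ i < m, (X - C (t (i + 1))) ∣ B i)
    (hAA : ∀ i < m, (A (i + 1)).eval (t (i + 1)) = -(A i).eval (t (i + 1)))
    (η : ℂ) (hη : η = (A 0).eval (t 0))
    (Cp : ℂ[X]) (hCp : Cp * (X - C (t 0)) = A 0 - C η)
    (α β : ℕ → ℂ[X])
    (hα : ∀ i : ℕ, 1 ≤ i → i ≤ m → α i * (X - C (t i)) = A (i - 1) + A i)
    (hβ : ∀ i : ℕ, 1 ≤ i → i ≤ m → β i * (X - C (t i)) = X ^ (g + 1) * B (i - 1))
    (G H : ℤ → ℂ[X])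
    (hGm1 : G (-1) = 1) (hHm1 : H (-1) = 0) (hG0 : G 0 = Cp) (hH0 : H 0 = 1)
    (hGrec : ∀ i : ℕ, 1 ≤ i → i ≤ m → G i = α i * G (i - 1) + β i * G (i - 2))
    (hHrec : ∀ i : ℕ, 1 ≤ i → i ≤ m → H i = α i * H (i - 1) + β i * H (i - 2))
    (F : PowerSeries ℂ)
    (hF : F = (σ - PowerSeries.C η) * (((X - C (t 0) : ℂ[X]) : PowerSeries ℂ))⁻¹)
    (Q : ℕ → PowerSeries ℂ)
    (hQ : ∀ i ≤ m, Q i = (B i : PowerSeries ℂ) * PowerSeries.X ^ (g + 1)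
      * (σ + (A i : PowerSeries ℂ))⁻¹) :
    ∀ k ≤ m, (G k : PowerSeries ℂ) - (H k : PowerSeries ℂ) * F
      = (-1) ^ (k + 1) * ∏ i ∈ Finset.range (k + 1), Q i := by
  have hξne : ξ ≠ 0 := by
    intro h; apply hp₀ne; rw [← hξ, h]; ring
  have h2ξ : (2 : ℂ) * ξ ≠ 0 := by
    intro h
    rcases mul_eq_zero.mp h with h | h
    · norm_num at h
    · exact hξne h
  -- constant coefficient facts
  have hsAc : ∀ i ≤ m, PowerSeries.constantCoeff (σ + (A i : PowerSeries ℂ)) = 2 * ξ := by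
    intro i hi
    rw [map_add, hσ0, Polynomial.constantCoeff_coe, Polynomial.coeff_zero_eq_eval_zero, hA0 i hi]
    ring
  have hsAne : ∀ i ≤ m, (σ + (A i : PowerSeries ℂ)) ≠ 0 := by
    intro i hi h
    have := hsAc i hi
    rw [h, map_zero] at this
    exact h2ξ this.symm
  have htc : ∀ i, PowerSeries.constantCoeff ((X - C (t i) : ℂ[X]) : PowerSeries ℂ) = -(t i) := by
    intro i
    rw [Polynomial.constantCoeff_coe]
    simp
  have htcne : ∀ i ≤ m, PowerSeries.constantCoeff ((X - C (t i) : ℂ[X]) : PowerSeries ℂ) ≠ 0 := by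
    intro i hi h
    rw [htc i] at h
    exact ht i hi (by simpa using h)
  have htne : ∀ i ≤ m, ((X - C (t i) : ℂ[X]) : PowerSeries ℂ) ≠ 0 := by
    intro i hi h
    exact htcne i hi (by rw [h, map_zero])
  -- L1 : Q i * (σ + A i) = B i * X^(g+1)
  have L1 : ∀ i ≤ m, Q i * (σ + (A i : PowerSeries ℂ))
      = (B i : PowerSeries ℂ) * PowerSeries.X ^ (g + 1) := by
    intro i hi
    have hinv : (σ + (A i : PowerSeries ℂ)) * (σ + (A i : PowerSeries ℂ))⁻¹ = 1 :=
      PowerSeries.mul_inv_cancel _ (by rw [hsAc i hi]; exact h2ξ)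
    rw [hQ i hi]
    calc (B i : PowerSeries ℂ) * PowerSeries.X ^ (g + 1) * (σ + (A i : PowerSeries ℂ))⁻¹
          * (σ + (A i : PowerSeries ℂ))
        = (B i : PowerSeries ℂ) * PowerSeries.X ^ (g + 1)
          * ((σ + (A i : PowerSeries ℂ)) * (σ + (A i : PowerSeries ℂ))⁻¹) := by ring
      _ = (B i : PowerSeries ℂ) * PowerSeries.X ^ (g + 1) := by rw [hinv, mul_one]
  -- L2 : Q i * (X - t i) = σ - A i
  have L2 : ∀ i ≤ m, Q i * ((X - C (t i) : ℂ[X]) : PowerSeries ℂ) = σ - (A i : PowerSeries ℂ) := by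
    intro i hi
    apply mul_right_cancel₀ (hsAne i hi)
    have hx : ((XX - A i ^ 2 : ℂ[X]) : PowerSeries ℂ)
        = (B i : PowerSeries ℂ) * PowerSeries.X ^ (g + 1)
          * ((X - C (t i) : ℂ[X]) : PowerSeries ℂ) := by
      rw [hXAB i hi, Polynomial.coe_mul, Polynomial.coe_mul, Polynomial.coe_pow,
        Polynomial.coe_X]
    have hx2 : ((XX - A i ^ 2 : ℂ[X]) : PowerSeries ℂ)
        = σ ^ 2 - (A i : PowerSeries ℂ) ^ 2 := by
      rw [pcoe_sub, Polynomial.coe_pow, hσ]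
    have e1 := L1 i hi
    linear_combination ((X - C (t i) : ℂ[X]) : PowerSeries ℂ) * e1 + hx2 - hx
  -- key lemma
  have keylem : ∀ j : ℕ, j + 1 ≤ m →
      (β (j + 1) : PowerSeries ℂ) - (α (j + 1) : PowerSeries ℂ) * Q j = Q j * Q (j + 1) := by
    intro j hj
    have hjm : j ≤ m := by omega
    apply mul_right_cancel₀ (htne (j + 1) hj)
    have e1 : (β (j + 1) : PowerSeries ℂ) * ((X - C (t (j + 1)) : ℂ[X]) : PowerSeries ℂ)
        = PowerSeries.X ^ (g + 1) * (B j : PowerSeries ℂ) := by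
      have := hβ (j + 1) (by omega) hj
      simp only [Nat.add_sub_cancel] at this
      calc (β (j + 1) : PowerSeries ℂ) * ((X - C (t (j + 1)) : ℂ[X]) : PowerSeries ℂ)
          = ((β (j + 1) * (X - C (t (j + 1))) : ℂ[X]) : PowerSeries ℂ) := by
            rw [Polynomial.coe_mul]
        _ = ((X ^ (g + 1) * B j : ℂ[X]) : PowerSeries ℂ) := by rw [this]
        _ = PowerSeries.X ^ (g + 1) * (B j : PowerSeries ℂ) := by
            rw [Polynomial.coe_mul, Polynomial.coe_pow, Polynomial.coe_X]
    have e2 : (α (j + 1) : PowerSeries ℂ) * ((X - C (t (j + 1)) : ℂ[X]) : PowerSeries ℂ)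
        = (A j : PowerSeries ℂ) + (A (j + 1) : PowerSeries ℂ) := by
      have := hα (j + 1) (by omega) hj
      simp only [Nat.add_sub_cancel] at this
      rw [← Polynomial.coe_mul, this, Polynomial.coe_add]
    have e3 := L1 j hjm
    have e4 := L2 (j + 1) hj
    linear_combination e1 - Q j * e2      - e3 - Q j * e4
  -- base facts for F
  have hFt : F * ((X - C (t 0) : ℂ[X]) : PowerSeries ℂ) = σ - PowerSeries.C η := by
    have hinv : ((X - C (t 0) : ℂ[X]) : PowerSeries ℂ)
        * (((X - C (t 0) : ℂ[X]) : PowerSeries ℂ))⁻¹ = 1 :=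
      PowerSeries.mul_inv_cancel _ (htcne 0 (Nat.zero_le m))
    rw [hF]
    calc (σ - PowerSeries.C η) * (((X - C (t 0) : ℂ[X]) : PowerSeries ℂ))⁻¹
          * ((X - C (t 0) : ℂ[X]) : PowerSeries ℂ)
        = (σ - PowerSeries.C η) * (((X - C (t 0) : ℂ[X]) : PowerSeries ℂ)
          * (((X - C (t 0) : ℂ[X]) : PowerSeries ℂ))⁻¹) := by ring
      _ = σ - PowerSeries.C η := by rw [hinv, mul_one]
  intro k
  induction k using Nat.strong_induction_on with
  | _ k IH =>
    intro hk
    match k with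
    | 0 =>
      have hcast : ((0 : ℕ) : ℤ) = 0 := by norm_num
      rw [hcast, hG0, hH0]
      simp only [zero_add, Finset.prod_range_one, pow_one]
      apply mul_right_cancel₀ (htne 0 (Nat.zero_le m))
      have e6 : (Cp : PowerSeries ℂ) * ((X - C (t 0) : ℂ[X]) : PowerSeries ℂ)
          = (A 0 : PowerSeries ℂ) - PowerSeries.C η := by
        rw [← Polynomial.coe_mul, hCp, pcoe_sub, Polynomial.coe_C]
      have e7 := L2 0 (Nat.zero_le m)
      have e5 := hFt
      rw [Polynomial.coe_one]
      linear_combination e6 - e5 + e7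
    | (j + 1) =>
      have hjm : j ≤ m := by omega
      have IH1 := IH j (Nat.lt_succ_self j) hjm
      have IH1' : (G (j : ℤ) : PowerSeries ℂ) - (H (j : ℤ) : PowerSeries ℂ) * F
          = (-1) ^ (j + 1) * ((∏ i ∈ Finset.range j, Q i) * Q j) := by
        rw [← Finset.prod_range_succ]; exact IH1
      have IH2 : (G ((j : ℤ) - 1) : PowerSeries ℂ) - (H ((j : ℤ) - 1) : PowerSeries ℂ) * F
          = (-1) ^ j * ∏ i ∈ Finset.range j, Q i := by
        match j with
        | 0 =>
          have hc : ((0 : ℕ) : ℤ) - 1 = -1 := by norm_num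
          rw [hc, hGm1, hHm1]
          simp
        | (l + 1) =>
          have hc : ((l + 1 : ℕ) : ℤ) - 1 = (l : ℤ) := by push_cast; ring
          rw [hc]
          have := IH l (by omega) (by omega)
          rw [this]
      have hG := hGrec (j + 1) (by omega) hk
      have hH := hHrec (j + 1) (by omega) hk
      have c1 : ((j + 1 : ℕ) : ℤ) - 1 = (j : ℤ) := by push_cast; ring
      have c2 : ((j + 1 : ℕ) : ℤ) - 2 = (j : ℤ) - 1 := by push_cast; ring
      rw [c1, c2] at hG hH
      have hkey := keylem j hk
      rw [hG, hH, Polynomial.coe_add, Polynomial.coe_add, Polynomial.coe_mul,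
        Polynomial.coe_mul, Polynomial.coe_mul, Polynomial.coe_mul,
        Finset.prod_range_succ, Finset.prod_range_succ]
      linear_combination (α (j + 1) : PowerSeries ℂ) * IH1'
        + (β (j + 1) : PowerSeries ℂ) * IH2
        + ((-1) ^ j * ∏ i ∈ Finset.range j, Q i) * hkey
end

section
/- Under the hypotheses of the hyperelliptic Halphen continued-fraction package (see context), the power series G_m − H_m·F ∈ ℂ[[s]] has a zero at s = 0 of order at least (g+1)(m+1), i.e. s^{(g+1)(m+1)} divides G_m − H_m·F in ℂ[[s]]. Moreover, if H_m(0) ≠ 0 then H_m is invertible in ℂ[[s]] and the power series F − G_m·H_m⁻¹ is also divisible by s^{(g+1)(m+1)} in ℂ[[s]]. -/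
open Polynomial

/-- For the hyperelliptic Halphen continued-fraction package, `G_m − H_m·F` has a zero
of order at least `(g+1)(m+1)` at `s = 0`; and if `H_m(0) ≠ 0` then `H_m` is invertible
in `ℂ[[s]]` and `F − G_m·H_m⁻¹` is also divisible by `s^{(g+1)(m+1)}`. -/
theorem stmt_19 (g : ℕ) (hg : 1 ≤ g)
    (XX : ℂ[X]) (hdeg : XX.natDegree = 2 * g + 2)
    (p₀ : ℂ) (hp₀ : XX.coeff 0 = p₀) (hp₀ne : p₀ ≠ 0)
    (ξ : ℂ) (hξ : ξ ^ 2 = p₀)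
    (σ : PowerSeries ℂ) (hσ0 : PowerSeries.constantCoeff σ = ξ)
    (hσ : σ ^ 2 = (XX : PowerSeries ℂ))
    (m : ℕ)
    (t : ℕ → ℂ) (ht : ∀ i ≤ m, t i ≠ 0)
    (A B : ℕ → ℂ[X])
    (hAdeg : ∀ i ≤ m, (A i).natDegree ≤ g + 1)
    (hA0 : ∀ i ≤ m, (A i).eval 0 = ξ)
    (hXAB : ∀ i ≤ m, XX - (A i) ^ 2 = B i * X ^ (g + 1) * (X - C (t i)))
    (hdvd : ∀ i < m, (X - C (t (i + 1))) ∣ B i)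
    (hAA : ∀ i < m, (A (i + 1)).eval (t (i + 1)) = -(A i).eval (t (i + 1)))
    (η : ℂ) (hη : η = (A 0).eval (t 0))
    (Cp : ℂ[X]) (hCp : Cp * (X - C (t 0)) = A 0 - C η)
    (α β : ℕ → ℂ[X])
    (hα : ∀ i : ℕ, 1 ≤ i → i ≤ m → α i * (X - C (t i)) = A (i - 1) + A i)
    (hβ : ∀ i : ℕ, 1 ≤ i → i ≤ m → β i * (X - C (t i)) = X ^ (g + 1) * B (i - 1))
    (G H : ℤ → ℂ[X])
    (hGm1 : G (-1) = 1) (hHm1 : H (-1) = 0) (hG0 : G 0 = Cp) (hH0 : H 0 = 1)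
    (hGrec : ∀ i : ℕ, 1 ≤ i → i ≤ m → G i = α i * G (i - 1) + β i * G (i - 2))
    (hHrec : ∀ i : ℕ, 1 ≤ i → i ≤ m → H i = α i * H (i - 1) + β i * H (i - 2))
    (F : PowerSeries ℂ)
    (hF : F = (σ - PowerSeries.C η) * (((X - C (t 0) : ℂ[X]) : PowerSeries ℂ))⁻¹)
    (Q : ℕ → PowerSeries ℂ)
    (hQ : ∀ i ≤ m, Q i = (B i : PowerSeries ℂ) * PowerSeries.X ^ (g + 1)
      * (σ + (A i : PowerSeries ℂ))⁻¹) :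
    PowerSeries.X ^ ((g + 1) * (m + 1))
      ∣ ((G m : PowerSeries ℂ) - (H m : PowerSeries ℂ) * F) ∧
    ((H m).coeff 0 ≠ 0 →
      IsUnit ((H m : ℂ[X]) : PowerSeries ℂ) ∧
      PowerSeries.X ^ ((g + 1) * (m + 1))
        ∣ (F - (G m : PowerSeries ℂ) * (((H m : ℂ[X]) : PowerSeries ℂ))⁻¹)) := by
  have hξne : ξ ≠ 0 := by
    intro h; exact hp₀ne (by rw [← hξ, h]; ring)
  -- constant coefficient facts
  have hccA : ∀ i ≤ m, PowerSeries.constantCoeff ((A i : PowerSeries ℂ)) = ξ := by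
    intro i hi
    rw [Polynomial.constantCoeff_coe, Polynomial.coeff_zero_eq_eval_zero, hA0 i hi]
  have hσAne : ∀ i ≤ m, PowerSeries.constantCoeff (σ + (A i : PowerSeries ℂ)) ≠ 0 := by
    intro i hi
    rw [map_add, hσ0, hccA i hi]
    intro h
    have : ξ = 0 := by linear_combination h / 2
    exact hξne this
  have hσAne' : ∀ i ≤ m, σ + (A i : PowerSeries ℂ) ≠ 0 := by
    intro i hi h
    exact hσAne i hi (by rw [h, map_zero])
  have hXtcc : ∀ i, PowerSeries.constantCoeff (((X - C (t i) : ℂ[X]) : PowerSeries ℂ)) = -(t i) := by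
    intro i
    rw [Polynomial.constantCoeff_coe, Polynomial.coeff_zero_eq_eval_zero]
    simp
  have hXtne : ∀ i ≤ m, (((X - C (t i) : ℂ[X]) : PowerSeries ℂ)) ≠ 0 := by
    intro i hi h
    have := hXtcc i
    rw [h, map_zero] at this
    exact ht i hi (by simpa using this.symm)
  -- Q i * (σ + A i) = B i * X^(g+1)
  have hQmul : ∀ i ≤ m, Q i * (σ + (A i : PowerSeries ℂ))
      = (B i : PowerSeries ℂ) * PowerSeries.X ^ (g + 1) := by
    intro i hi
    rw [hQ i hi, mul_assoc, mul_comm ((σ + (A i : PowerSeries ℂ))⁻¹),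
      PowerSeries.mul_inv_cancel _ (hσAne i hi), mul_one]
  -- σ - A i = Q i * (X - t i)
  have hσA : ∀ i ≤ m, σ - (A i : PowerSeries ℂ)
      = Q i * (((X - C (t i) : ℂ[X]) : PowerSeries ℂ)) := by
    intro i hi
    have h1 : (σ - (A i : PowerSeries ℂ)) * (σ + (A i : PowerSeries ℂ))
        = (B i : PowerSeries ℂ) * PowerSeries.X ^ (g + 1)
          * (((X - C (t i) : ℂ[X]) : PowerSeries ℂ)) := by
      have h2 := hXAB i hi
      have h3 : ((XX - (A i) ^ 2 : ℂ[X]) : PowerSeries ℂ)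
          = ((B i * X ^ (g + 1) * (X - C (t i)) : ℂ[X]) : PowerSeries ℂ) := by rw [h2]
      simp only [Polynomial.coe_sub, Polynomial.coe_add, Polynomial.coe_mul, Polynomial.coe_pow,
        Polynomial.coe_X, Polynomial.coe_C, Polynomial.coe_one, Polynomial.coe_zero] at h3
      rw [← hσ] at h3
      simp only [Polynomial.coe_sub, Polynomial.coe_add, Polynomial.coe_mul, Polynomial.coe_pow,
        Polynomial.coe_X, Polynomial.coe_C, Polynomial.coe_one, Polynomial.coe_zero]
      linear_combination h3
    have h4 := hQmul i hi
    apply mul_right_cancel₀ (hσAne' i hi)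
    simp only [Polynomial.coe_sub, Polynomial.coe_add, Polynomial.coe_mul, Polynomial.coe_pow,
        Polynomial.coe_X, Polynomial.coe_C, Polynomial.coe_one, Polynomial.coe_zero] at h1 ⊢
    linear_combination h1 - (PowerSeries.X - PowerSeries.C (t i)) * h4
  -- F = Cp + Q 0
  have hm0 : (0 : ℕ) ≤ m := Nat.zero_le m
  have hFQ : F = (Cp : PowerSeries ℂ) + Q 0 := by
    apply mul_right_cancel₀ (hXtne 0 hm0)
    have hXtcc0 : PowerSeries.constantCoeff (((X - C (t 0) : ℂ[X]) : PowerSeries ℂ)) ≠ 0 := by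
      rw [hXtcc 0]; simpa using ht 0 hm0
    have hFc : F * (((X - C (t 0) : ℂ[X]) : PowerSeries ℂ))
        = σ - PowerSeries.C η := by
      rw [hF, mul_assoc, mul_comm ((((X - C (t 0) : ℂ[X]) : PowerSeries ℂ))⁻¹),
        PowerSeries.mul_inv_cancel _ hXtcc0, mul_one]
    rw [hFc]
    have hC : ((Cp * (X - C (t 0)) : ℂ[X]) : PowerSeries ℂ)
        = ((A 0 - C η : ℂ[X]) : PowerSeries ℂ) := by rw [hCp]
    simp only [Polynomial.coe_sub, Polynomial.coe_add, Polynomial.coe_mul, Polynomial.coe_pow,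
        Polynomial.coe_X, Polynomial.coe_C, Polynomial.coe_one, Polynomial.coe_zero] at hC
    have hq0 := hσA 0 hm0
    simp only [Polynomial.coe_sub, Polynomial.coe_add, Polynomial.coe_mul, Polynomial.coe_pow,
        Polynomial.coe_X, Polynomial.coe_C, Polynomial.coe_one, Polynomial.coe_zero] at hq0 ⊢
    linear_combination hq0 - hC
  -- main recursion: G i - H i F = -(Q i) * (G (i-1) - H (i-1) F)
  have key : ∀ i : ℕ, i ≤ m →
      ((G i : PowerSeries ℂ) - (H i : PowerSeries ℂ) * F)
        = -(Q i) * ((G ((i : ℤ) - 1) : PowerSeries ℂ)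
            - (H ((i : ℤ) - 1) : PowerSeries ℂ) * F) := by
    intro i
    induction i with
    | zero =>
      intro _
      norm_num
      rw [hG0, hH0, hGm1, hHm1, hFQ]
      simp only [Polynomial.coe_one, Polynomial.coe_zero]
      ring
    | succ n ih =>
      intro hn
      have hn' : n ≤ m := Nat.le_of_succ_le hn
      have h1 := ih hn'
      -- Q n * (α (n+1) + Q (n+1)) = β (n+1)
      have h2 : Q n * ((α (n + 1) : PowerSeries ℂ) + Q (n + 1))
          = (β (n + 1) : PowerSeries ℂ) := by
        apply mul_right_cancel₀ (hXtne (n + 1) hn)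
        have ha := hα (n + 1) (Nat.le_add_left 1 n) hn
        have hb := hβ (n + 1) (Nat.le_add_left 1 n) hn
        simp only [Nat.add_sub_cancel] at ha hb
        have ha' : ((α (n + 1) * (X - C (t (n + 1))) : ℂ[X]) : PowerSeries ℂ)
            = ((A n + A (n + 1) : ℂ[X]) : PowerSeries ℂ) := by rw [ha]
        have hb' : ((β (n + 1) * (X - C (t (n + 1))) : ℂ[X]) : PowerSeries ℂ)
            = ((X ^ (g + 1) * B n : ℂ[X]) : PowerSeries ℂ) := by rw [hb]
        have hq1 := hσA (n + 1) hn
        have hqn := hQmul n hn'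
        simp only [Polynomial.coe_sub, Polynomial.coe_add, Polynomial.coe_mul, Polynomial.coe_pow,
        Polynomial.coe_X, Polynomial.coe_C, Polynomial.coe_one, Polynomial.coe_zero] at ha' hb' hq1 ⊢
        linear_combination Q n * ha' - hb' - Q n * hq1 + hqn
      -- recurrences
      have hGr := hGrec (n + 1) (Nat.le_add_left 1 n) hn
      have hHr := hHrec (n + 1) (Nat.le_add_left 1 n) hn
      have e1 : ((n + 1 : ℕ) : ℤ) - 1 = (n : ℤ) := by push_cast; ring
      have e2 : ((n + 1 : ℕ) : ℤ) - 2 = (n : ℤ) - 1 := by push_cast; ring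
      rw [e1, e2] at hGr hHr
      rw [e1, hGr, hHr]
      simp only [Polynomial.coe_add, Polynomial.coe_mul]
      linear_combination ((α (n + 1) : PowerSeries ℂ)) * h1 + Q (n + 1) * h1
        - ((G ((n : ℤ) - 1) : PowerSeries ℂ)
            - (H ((n : ℤ) - 1) : PowerSeries ℂ) * F) * h2
  -- X^(g+1) divides Q i
  have hQdvd : ∀ i ≤ m, (PowerSeries.X : PowerSeries ℂ) ^ (g + 1) ∣ Q i := by
    intro i hi
    rw [hQ i hi]
    exact (dvd_mul_left _ _).mul_right _
  -- divisibility by induction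
  have hdvdE : ∀ i ≤ m, (PowerSeries.X : PowerSeries ℂ) ^ ((g + 1) * (i + 1))
      ∣ ((G i : PowerSeries ℂ) - (H i : PowerSeries ℂ) * F) := by
    intro i
    induction i with
    | zero =>
      intro hi
      have hk := key 0 hi
      norm_num at hk
      rw [hGm1, hHm1] at hk
      simp only [Polynomial.coe_one, Polynomial.coe_zero] at hk
      have hk2 : ((G (0 : ℤ)) : PowerSeries ℂ) - ((H (0 : ℤ)) : PowerSeries ℂ) * F
          = -Q 0 := by rw [hk]; ring
      simp only [Nat.cast_zero]
      rw [hk2]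
      have e : (g + 1) * (0 + 1) = g + 1 := by ring
      rw [e]
      exact (hQdvd 0 hi).neg_right
    | succ n ih =>
      intro hn
      have hn' : n ≤ m := Nat.le_of_succ_le hn
      have hk := key (n + 1) hn
      have e1 : ((n + 1 : ℕ) : ℤ) - 1 = (n : ℤ) := by push_cast; ring
      rw [e1] at hk
      rw [hk]
      have hmul : (g + 1) * (n + 1 + 1) = (g + 1) + (g + 1) * (n + 1) := by ring
      rw [hmul, pow_add]
      exact mul_dvd_mul ((hQdvd (n + 1) hn).neg_right) (ih hn')
  refine ⟨hdvdE m le_rfl, fun h0 => ?_⟩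
  have hu : PowerSeries.constantCoeff ((H m : ℂ[X]) : PowerSeries ℂ) ≠ 0 := by
    rw [Polynomial.constantCoeff_coe]; exact h0
  have hinv : ((H m : ℂ[X]) : PowerSeries ℂ) * ((H m : ℂ[X]) : PowerSeries ℂ)⁻¹ = 1 :=
    PowerSeries.mul_inv_cancel _ hu
  refine ⟨IsUnit.of_mul_eq_one _ hinv, ?_⟩
  have heq : F - (G m : PowerSeries ℂ) * (((H m : ℂ[X]) : PowerSeries ℂ))⁻¹
      = ((G m : PowerSeries ℂ) - (H m : PowerSeries ℂ) * F)
        * (-(((H m : ℂ[X]) : PowerSeries ℂ))⁻¹) := by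
    linear_combination (-F) * hinv
  rw [heq]
  exact (hdvdE m le_rfl).mul_right _
end
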